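/- Let R be an (m,n,k,λ)-relative difference set in an abelian group G relative to a subgroup N, and let T be an (n/n', n', k', λ')-relative difference set in N relative to a subgroup N' of N. If kλ' - k'λ = λλ'(n - n'), then the group ring product RT ∈ ℤ[G] is the formal sum of an (mn/n', n', kk', kλ')-relative difference set in G relative to N' (in particular RT has 0/1 coefficients). -/

import Mathlib

open Finset
open scoped Pointwise Classical

/-- The formal sum `∑_{x ∈ s} x` of a finite subset of a group in the
integral group ring `ℤ[G]`. -/
noncomputable def fsum {G : Type*} [Group G] [DecidableEq G] (s : Finset G) :
    MonoidAlgebra ℤ G :=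
  ∑ x ∈ s, MonoidAlgebra.single x 1

set_option linter.unusedSectionVars false
section Aux
variable {G : Type*} [CommGroup G] [Fintype G] [DecidableEq G]

lemma fsum_apply (s : Finset G) (g : G) : (fsum s).coeff g = if g ∈ s then 1 else 0 := by
  classical
  rw [fsum, MonoidAlgebra.coeff_sum, Finsupp.finset_sum_apply]
  simp [MonoidAlgebra.coeff_single, Finsupp.single_apply, Finset.sum_ite_eq' s g (fun _ => (1:ℤ))]

lemma fsum_mul (s t : Finset G) :
    fsum s * fsum t = ∑ p ∈ s ×ˢ t, MonoidAlgebra.single (p.1 * p.2) (1:ℤ) := by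
  rw [fsum, fsum, Finset.sum_mul_sum, Finset.sum_product]
  simp [MonoidAlgebra.single_mul_single]

lemma fsum_mul_of_injOn (s t : Finset G)
    (h : Set.InjOn (fun p : G × G => p.1 * p.2) (s ×ˢ t : Finset (G × G))) :
    fsum s * fsum t = fsum (s * t) := by
  rw [fsum_mul, fsum, ← Finset.image_mul_product, Finset.sum_image (fun a ha b hb => h ha hb)]

lemma card_mul_of_injOn (s t : Finset G)
    (h : Set.InjOn (fun p : G × G => p.1 * p.2) (s ×ˢ t : Finset (G × G))) :
    (s * t).card = s.card * t.card := by
  rw [← Finset.image_mul_product, Finset.card_image_of_injOn h, Finset.card_product]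

lemma fsum_mul_single (s : Finset G) (x : G) (hx : s.image (· * x) = s) :
    fsum s * MonoidAlgebra.single x 1 = fsum s := by
  rw [fsum, Finset.sum_mul]
  simp only [MonoidAlgebra.single_mul_single, mul_one]
  conv_rhs => rw [← hx, Finset.sum_image (fun a _ b _ hab => mul_right_cancel hab)]

lemma fsum_mul_absorb (s X : Finset G) (h : ∀ x ∈ X, s.image (· * x) = s) :
    fsum s * fsum X = (X.card : ℤ) • fsum s := by
  rw [show fsum X = ∑ x ∈ X, MonoidAlgebra.single x 1 from rfl, Finset.mul_sum,
    Finset.sum_congr rfl (fun x hx => fsum_mul_single s x (h x hx)), Finset.sum_const]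
  simp [zsmul_eq_mul]

end Aux

section Aux2
set_option linter.unusedSectionVars false
variable {G : Type*} [CommGroup G] [Fintype G] [DecidableEq G]

lemma image_mul_subgroup (H : Subgroup G) {x : G} (hx : x ∈ H) :
    (univ.filter (· ∈ H)).image (· * x) = univ.filter (· ∈ H) := by
  ext g
  simp only [mem_image, mem_filter, mem_univ, true_and]
  constructor
  · rintro ⟨a, ha, rfl⟩; exact H.mul_mem ha hx
  · intro hg; exact ⟨g * x⁻¹, H.mul_mem hg (H.inv_mem hx), by simp⟩

lemma image_mul_univ (x : G) : (univ : Finset G).image (· * x) = univ := by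
  ext g
  simp only [mem_image, mem_univ, iff_true, true_and]
  exact ⟨g * x⁻¹, by simp⟩

lemma card_filter_subgroup (H : Subgroup G) :
    (univ.filter (· ∈ H)).card = Fintype.card H := by
  rw [Fintype.card_subtype]

lemma ma_add_apply (f g : MonoidAlgebra ℤ G) (x : G) : (f + g).coeff x = f.coeff x + g.coeff x :=
  Finsupp.add_apply f.coeff g.coeff x

lemma ma_sub_apply (f g : MonoidAlgebra ℤ G) (x : G) : (f - g).coeff x = f.coeff x - g.coeff x :=
  Finsupp.sub_apply f.coeff g.coeff x

lemma ma_smul_apply (c : ℤ) (f : MonoidAlgebra ℤ G) (x : G) : (c • f).coeff x = c * f.coeff x :=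
  Finsupp.smul_apply c f.coeff x

lemma ma_sum_apply {ι : Type*} (s : Finset ι) (f : ι → MonoidAlgebra ℤ G) (x : G) :
    (∑ i ∈ s, f i).coeff x = ∑ i ∈ s, (f i).coeff x := by
  rw [MonoidAlgebra.coeff_sum]; exact Finsupp.finset_sum_apply s (fun i => (f i).coeff) x

lemma ma_one_apply (x : G) : (1 : MonoidAlgebra ℤ G).coeff x = if x = 1 then 1 else 0 := by
  rw [MonoidAlgebra.one_def]
  exact (Finsupp.single_apply).trans (by simp [eq_comm])

lemma ma_single_apply (a x : G) (b : ℤ) :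
    (MonoidAlgebra.single a b : MonoidAlgebra ℤ G).coeff x = if a = x then b else 0 :=
  Finsupp.single_apply

lemma sep_of_rds {N : Subgroup G} {R : Finset G} {k lam : ℕ}
    (hR : fsum R * fsum R⁻¹ =
      (k : ℤ) • 1 + (lam : ℤ) • (fsum (univ : Finset G) - fsum (univ.filter (· ∈ N)))) :
    ∀ r₁ ∈ R, ∀ r₂ ∈ R, r₁ * r₂⁻¹ ∈ N → r₁ = r₂ := by
  intro r₁ h₁ r₂ h₂ hmem
  by_contra hne
  have hg1 : r₁ * r₂⁻¹ ≠ 1 := fun h => hne (mul_inv_eq_one.mp h)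
  have key : (fsum R * fsum R⁻¹).coeff (r₁ * r₂⁻¹) =
      ((k : ℤ) • 1 + (lam : ℤ) •
        (fsum (univ : Finset G) - fsum (univ.filter (· ∈ N)))).coeff (r₁ * r₂⁻¹) := by
    rw [hR]
  rw [fsum_mul] at key
  simp only [ma_sum_apply, ma_add_apply, ma_smul_apply, ma_sub_apply, fsum_apply,
    ma_one_apply, ma_single_apply] at key
  rw [if_pos (mem_univ _), if_pos (by simp [hmem] : r₁ * r₂⁻¹ ∈ univ.filter (· ∈ N)),
    if_neg hg1] at key
  have hle : (1 : ℤ) ≤ ∑ p ∈ R ×ˢ R⁻¹,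
      if p.1 * p.2 = r₁ * r₂⁻¹ then (1 : ℤ) else 0 := by
    have hmemp : ((r₁, r₂⁻¹) : G × G) ∈ R ×ˢ R⁻¹ :=
      mem_product.mpr ⟨h₁, Finset.inv_mem_inv h₂⟩
    have h := Finset.single_le_sum
      (f := fun p : G × G => if p.1 * p.2 = r₁ * r₂⁻¹ then (1 : ℤ) else 0)
      (fun p _ => by split <;> norm_num) hmemp
    simpa using h
  rw [key] at hle
  simp at hle

end Aux2

section Aux3
set_option linter.unusedSectionVars false
variable {G : Type*} [CommGroup G] [Fintype G] [DecidableEq G]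

lemma injOn_of_sep {N : Subgroup G} {S U : Finset G}
    (hsep : ∀ r₁ ∈ S, ∀ r₂ ∈ S, r₁ * r₂⁻¹ ∈ N → r₁ = r₂)
    (hU : ∀ x ∈ U, x ∈ N) :
    Set.InjOn (fun p : G × G => p.1 * p.2) (S ×ˢ U : Finset (G × G)) := by
  rintro ⟨r₁, t₁⟩ hp₁ ⟨r₂, t₂⟩ hp₂ h
  simp only [Finset.coe_product, Set.mem_prod, Finset.mem_coe, Finset.mem_product] at hp₁ hp₂
  simp only at h
  have hr : r₁ = r₂ := by
    refine hsep r₁ hp₁.1 r₂ hp₂.1 ?_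
    have e : r₁ * r₂⁻¹ = t₂ * t₁⁻¹ := by
      have key : (r₁ * r₂⁻¹) * (r₂ * t₁) = (t₂ * t₁⁻¹) * (r₂ * t₁) := by
        calc (r₁ * r₂⁻¹) * (r₂ * t₁) = r₁ * t₁ := by group
          _ = r₂ * t₂ := h
          _ = (t₂ * t₁⁻¹) * (r₂ * t₁) := by
              rw [mul_mul_mul_comm t₂ t₁⁻¹ r₂ t₁]
              simp [mul_comm]
      exact mul_right_cancel key
    rw [e]; exact N.mul_mem (hU _ hp₂.2) (N.inv_mem (hU _ hp₁.2))
  subst hr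
  obtain rfl : t₁ = t₂ := mul_left_cancel h
  rfl

end Aux3


/-- `D` is an `(m,n,k,λ)`-relative difference set in `G` relative to the
subgroup `N` (with `|G| = mn`, `|N| = n`): `|D| = k` and
`D D^{(-1)} = k·1 + λ(G - N)` in `ℤ[G]`. -/
def IsRelDiffSet {G : Type*} [CommGroup G] [Fintype G] [DecidableEq G]
    (D : Finset G) (N : Subgroup G) (k lam : ℕ) : Prop :=
  D.card = k ∧
    fsum D * fsum D⁻¹ =
      (k : ℤ) • 1 + (lam : ℤ) • (fsum (univ : Finset G) - fsum (univ.filter (· ∈ N)))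

/-- if `R` is an `(m,n,k,λ)`-relative difference set relative to
`N`, `T ⊆ N` is an `(n/n', n', k', λ')`-relative difference set in `N` relative
to `N' ≤ N`, and `kλ' - k'λ = λλ'(n - n')`, then `RT` is (the formal sum of) an
`(mn/n', n', kk', kλ')`-relative difference set in `G` relative to `N'`. -/
theorem stmt12 {G : Type*} [CommGroup G] [Fintype G] [DecidableEq G]
    (N N' : Subgroup G) (hN' : N' ≤ N)
    (R T : Finset G) (m n n' k k' lam lam' : ℕ)
    (hG : Fintype.card G = m * n) (hn : Fintype.card N = n)
    (hn' : Fintype.card N' = n') (hT : ∀ x ∈ T, x ∈ N)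
    (hR : IsRelDiffSet R N k lam)
    (hTrds : T.card = k' ∧
      fsum T * fsum T⁻¹ =
        (k' : ℤ) • 1 +
          (lam' : ℤ) • (fsum (univ.filter (· ∈ N)) - fsum (univ.filter (· ∈ N'))))
    (hcond : (k : ℤ) * lam' - k' * lam = lam * lam' * ((n : ℤ) - n')) :
    ∃ P : Finset G, fsum R * fsum T = fsum P ∧
      IsRelDiffSet P N' (k * k') (k * lam') := by
  classical
  obtain ⟨hRcard, hReq⟩ := hR
  obtain ⟨hTcard, hTeq⟩ := hTrds
  have hsep := sep_of_rds hReq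
  have hsepinv : ∀ r₁ ∈ R⁻¹, ∀ r₂ ∈ R⁻¹, r₁ * r₂⁻¹ ∈ N → r₁ = r₂ := by
    intro r₁ h₁ r₂ h₂ hmem
    have h₁' : r₁⁻¹ ∈ R := Finset.mem_inv'.mp h₁
    have h₂' : r₂⁻¹ ∈ R := Finset.mem_inv'.mp h₂
    have : r₁⁻¹ * (r₂⁻¹)⁻¹ ∈ N := by
      have : (r₁ * r₂⁻¹)⁻¹ ∈ N := N.inv_mem hmem
      simpa [mul_inv_rev, mul_comm] using this
    have := hsep _ h₁' _ h₂' this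
    exact inv_injective this
  have hTinv : ∀ x ∈ T⁻¹, x ∈ N := fun x hx =>
    (by simpa using N.inv_mem (hT _ (Finset.mem_inv'.mp hx)) : x ∈ N)
  have hinj := injOn_of_sep hsep hT
  have hinj' := injOn_of_sep hsepinv hTinv
  refine ⟨R * T, (fsum_mul_of_injOn R T hinj), ?_, ?_⟩
  · rw [card_mul_of_injOn R T hinj, hRcard, hTcard]
  · -- product equation
    have hPinv : (R * T)⁻¹ = R⁻¹ * T⁻¹ := by rw [mul_inv_rev, mul_comm]
    rw [← fsum_mul_of_injOn R T hinj, hPinv, ← fsum_mul_of_injOn R⁻¹ T⁻¹ hinj']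
    have hrearr : fsum R * fsum T * (fsum R⁻¹ * fsum T⁻¹)
        = (fsum R * fsum R⁻¹) * (fsum T * fsum T⁻¹) := by ring
    rw [hrearr, hReq, hTeq]
    -- absorption identities
    set gg := fsum (univ : Finset G) with hgg
    set nn := fsum (univ.filter (· ∈ N)) with hnn
    set nn' := fsum (univ.filter (· ∈ N')) with hnn'
    have h1 : gg * nn = (n : ℤ) • gg := by
      rw [hgg, hnn, fsum_mul_absorb _ _ (fun x _ => image_mul_univ x),
        card_filter_subgroup, hn]
    have h2 : gg * nn' = (n' : ℤ) • gg := by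
      rw [hgg, hnn', fsum_mul_absorb _ _ (fun x _ => image_mul_univ x),
        card_filter_subgroup, hn']
    have h3 : nn * nn = (n : ℤ) • nn := by
      rw [hnn, fsum_mul_absorb _ _
        (fun x hx => image_mul_subgroup N (Finset.mem_filter.mp hx).2),
        card_filter_subgroup, hn]
    have h4 : nn * nn' = (n' : ℤ) • nn := by
      rw [hnn, hnn', fsum_mul_absorb _ _
        (fun x hx => image_mul_subgroup N (hN' (Finset.mem_filter.mp hx).2)),
        card_filter_subgroup, hn']
    have hA : ((k : MonoidAlgebra ℤ G)) * (lam' : MonoidAlgebra ℤ G)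
        - (k' : MonoidAlgebra ℤ G) * (lam : MonoidAlgebra ℤ G)
        = (lam : MonoidAlgebra ℤ G) * (lam' : MonoidAlgebra ℤ G)
          * ((n : MonoidAlgebra ℤ G) - (n' : MonoidAlgebra ℤ G)) := by
      have := congrArg (fun z : ℤ => (z : MonoidAlgebra ℤ G)) hcond
      push_cast at this
      exact this
    simp only [zsmul_eq_mul] at h1 h2 h3 h4 ⊢
    push_cast at h1 h2 h3 h4 ⊢
    linear_combination ((lam : MonoidAlgebra ℤ G) * (lam' : MonoidAlgebra ℤ G))
      * (h1 - h2 - h3 + h4) - (gg - nn) * hA
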